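/- Let m ≥ 1 and p ∈ [1, ∞). There exist a continuous function f* : [0,1]^d → ℝ^m (for any d ≥ 1) and ε > 0 such that for every function of the form f = t ∘ g, where g : [0,1]^d → ℝ^{m−1} is any measurable function and t : ℝ^{m−1} → ℝ^m is any affine map, the L^p distance (∫_{[0,1]^d} ‖f*(x) − f(x)‖_p^p dx)^{1/p} exceeds ε. -/

import Mathlib

open MeasureTheory

lemma aux_normal (m : ℕ) (hm : 1 ≤ m) (L : (Fin (m-1) → ℝ) →ₗ[ℝ] (Fin m → ℝ)) :
    ∃ a : Fin m → ℝ, a ≠ 0 ∧ ∀ y, ∑ i, a i * L y i = 0 := by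
  set T : (Fin m → ℝ) →ₗ[ℝ] (Fin (m-1) → ℝ) :=
    { toFun := fun a j => ∑ i, a i * L (Pi.single j 1) i
      map_add' := by
        intro a b; funext j
        simp [add_mul, Finset.sum_add_distrib]
      map_smul' := by
        intro r a; funext j
        simp [Finset.mul_sum, mul_assoc] } with hT
  have hrep : ∀ (a : Fin m → ℝ) (z : Fin (m-1) → ℝ),
      ∑ i, a i * L z i = ∑ j, z j * T a j := by
    intro a z
    have hz : z = ∑ j, z j • (Pi.single j 1 : Fin (m-1) → ℝ) := by
      funext i
      simp [Finset.sum_apply, Pi.single_apply]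
    have hLz : ∀ i, L z i = ∑ j, z j * L (Pi.single j 1) i := by
      intro i
      conv_lhs => rw [hz]
      rw [map_sum, Finset.sum_apply]
      exact Finset.sum_congr rfl fun j _ => by rw [_root_.map_smul]; rfl
    calc ∑ i, a i * L z i
        = ∑ i, a i * ∑ j, z j * L (Pi.single j 1) i :=
          Finset.sum_congr rfl fun i _ => by rw [hLz i]
      _ = ∑ j, z j * T a j := by
          simp_rw [Finset.mul_sum]
          rw [Finset.sum_comm]
          refine Finset.sum_congr rfl fun j _ => ?_
          simp only [hT, LinearMap.coe_mk, AddHom.coe_mk]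
          rw [Finset.mul_sum]
          exact Finset.sum_congr rfl fun i _ => by ring
  have hnotinj : ¬ Function.Injective T := by
    intro h
    have h2 := LinearMap.finrank_le_finrank_of_injective h
    rw [Module.finrank_fin_fun, Module.finrank_fin_fun] at h2
    omega
  obtain ⟨x, y, hxy, hne⟩ := Function.not_injective_iff.mp hnotinj
  refine ⟨x - y, sub_ne_zero.mpr hne, fun z => ?_⟩
  rw [hrep (x - y) z]
  have : T (x - y) = 0 := by rw [map_sub, hxy, sub_self]
  rw [this]
  simp


open MeasureTheory

theorem stmt_9 (m d : ℕ) (hm : 1 ≤ m) (hd : 1 ≤ d) (p : ℝ) (hp : 1 ≤ p) :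
    ∃ (fstar : (Fin d → ℝ) → (Fin m → ℝ)) (ε : ℝ),
      Continuous fstar ∧ 0 < ε ∧
      ∀ (g : (Fin d → ℝ) → (Fin (m - 1) → ℝ)), Measurable g →
        ∀ t : (Fin (m - 1) → ℝ) →ᵃ[ℝ] (Fin m → ℝ),
          ENNReal.ofReal ε <
            (∫⁻ x in Set.Icc (0 : Fin d → ℝ) 1,
              ENNReal.ofReal (∑ i, |fstar x i - t (g x) i| ^ p)) ^ (1 / p) := by
  haveI : NeZero d := ⟨by omega⟩
  haveI : Nonempty (Fin m) := ⟨⟨0, hm⟩⟩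
  set n : ℝ := 2 * (m:ℝ) + 1 with hn
  have hn0 : (0:ℝ) < n := by positivity
  set fstar : (Fin d → ℝ) → Fin m → ℝ := fun x i =>
    max 0 (min 1 (min (n * x 0 - (2 * ((i:ℕ):ℝ) + 1)) ((2 * ((i:ℕ):ℝ) + 4) - n * x 0)))
    with hfstar
  have hcont : Continuous fstar := by
    apply continuous_pi
    intro i
    fun_prop
  set δ : ℝ := 1 / (2 * (m:ℝ)) with hδdef
  have hδ : 0 < δ := by positivity
  have hδp : 0 < δ ^ p := Real.rpow_pos_of_pos hδ p
  set E : ℝ := (δ ^ p * (1 / n)) ^ (1 / p) with hE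
  have hE0 : 0 < E := Real.rpow_pos_of_pos (by positivity) _
  refine ⟨fstar, E / 2, hcont, by positivity, ?_⟩
  intro g hg t
  -- get a normal vector
  obtain ⟨a0, ha0, hortho⟩ := aux_normal m hm t.linear
  set s : ℝ := ∑ i, |a0 i| with hs
  have hs0 : 0 < s := by
    obtain ⟨i, hi⟩ := Function.ne_iff.mp ha0
    exact Finset.sum_pos' (fun i _ => abs_nonneg _)
      ⟨i, Finset.mem_univ i, abs_pos.mpr hi⟩
  set a : Fin m → ℝ := fun i => a0 i / s with ha
  have ha1 : ∑ i, |a i| = 1 := by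
    have : ∀ i, |a i| = |a0 i| / s := fun i => by
      rw [ha, abs_div, abs_of_pos hs0]
    simp_rw [this]
    rw [← Finset.sum_div, div_self hs0.ne']
  set c : ℝ := ∑ i, a i * t 0 i with hc
  have hplane : ∀ y, ∑ i, a i * t y i = c := by
    intro y
    have hdec : ∀ i, t y i = t.linear y i + t 0 i := by
      intro i
      have := congrFun t.decomp y
      simp only [Pi.add_apply] at this ⊢
      rw [this]
      rfl
    have hzero : ∑ i, a i * t.linear y i = 0 := by
      have : ∀ i, a i * t.linear y i = a0 i * t.linear y i / s := fun i => by
        rw [ha]; ring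
      simp_rw [this]
      rw [← Finset.sum_div, hortho y, zero_div]
    calc ∑ i, a i * t y i = ∑ i, (a i * t.linear y i + a i * t 0 i) := by
          refine Finset.sum_congr rfl fun i _ => ?_
          rw [hdec i]; ring
      _ = c := by rw [Finset.sum_add_distrib, hzero, zero_add, hc]
  -- choose the plateau index k
  obtain ⟨k, hkm, hvlow⟩ :
      ∃ k : ℕ, k ≤ m ∧ δ ≤ |(∑ i, a i * (if (i:ℕ) + 1 = k then (1:ℝ) else 0)) - c| := by
    obtain ⟨j, hj⟩ : ∃ j : Fin m, 1 / (m:ℝ) ≤ |a j| := by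
      by_contra hcon
      push_neg at hcon
      have : ∑ i, |a i| < ∑ _i : Fin m, 1 / (m:ℝ) :=
        Finset.sum_lt_sum_of_nonempty Finset.univ_nonempty fun i _ => hcon i
      rw [ha1, Finset.sum_const, Finset.card_univ, Fintype.card_fin, nsmul_eq_mul,
        mul_one_div, div_self (by positivity : ((m:ℝ)) ≠ 0)] at this
      exact lt_irrefl _ this
    by_cases hcase : δ ≤ |c|
    · refine ⟨0, Nat.zero_le m, ?_⟩
      have : (∑ i, a i * (if (i:ℕ) + 1 = 0 then (1:ℝ) else 0)) = 0 := by
        simp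
      rw [this, zero_sub, abs_neg]
      exact hcase
    · push_neg at hcase
      refine ⟨(j:ℕ) + 1, by omega, ?_⟩
      have hsum : (∑ i, a i * (if (i:ℕ) + 1 = (j:ℕ) + 1 then (1:ℝ) else 0)) = a j := by
        have : ∀ i : Fin m, ((i:ℕ) + 1 = (j:ℕ) + 1) ↔ i = j := by
          intro i
          constructor
          · intro h; exact Fin.ext (by omega)
          · intro h; rw [h]
        simp_rw [this]
        simp [mul_ite]
      rw [hsum]
      have habs : |a j| ≤ |a j - c| + |c| := by
        calc |a j| = |(a j - c) + c| := by ring_nf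
          _ ≤ |a j - c| + |c| := abs_add_le _ _
      have hm1 : (1:ℝ) ≤ (m:ℝ) := by exact_mod_cast hm
      have : 1 / (m:ℝ) - δ ≤ |a j - c| := by
        have := hj
        nlinarith [abs_nonneg (a j - c)]
      have heq : 1 / (m:ℝ) - δ = δ := by
        rw [hδdef]
        field_simp
        ring
      linarith [heq ▸ this]
  set v : Fin m → ℝ := fun i => if (i:ℕ) + 1 = k then (1:ℝ) else 0 with hv
  -- the plateau set
  set S : Set (Fin d → ℝ) := Set.univ.pi
    (fun j : Fin d => if j = 0 then Set.Icc (2 * (k:ℝ) / n) ((2 * (k:ℝ) + 1) / n)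
      else Set.Icc 0 1) with hS
  have hkn : 2 * (k:ℝ) + 1 ≤ n := by
    rw [hn]
    have : (k:ℝ) ≤ (m:ℝ) := by exact_mod_cast hkm
    linarith
  have hSmeas : MeasurableSet S := by
    refine MeasurableSet.univ_pi fun j => ?_
    split <;> exact measurableSet_Icc
  have hSsub : S ⊆ Set.Icc (0 : Fin d → ℝ) 1 := by
    have : Set.Icc (0 : Fin d → ℝ) 1 =
        Set.univ.pi (fun _ : Fin d => Set.Icc (0:ℝ) 1) := by
      rw [Set.pi_univ_Icc]; rfl
    rw [this]
    refine Set.pi_mono fun j _ => ?_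
    split
    · refine Set.Icc_subset_Icc (by positivity) ?_
      rw [div_le_one hn0]
      linarith
    · exact subset_rfl
  have hSvol : volume S = ENNReal.ofReal (1 / n) := by
    rw [hS, volume_pi_pi]
    have hval : ∀ j : Fin d,
        volume (if j = 0 then Set.Icc (2 * (k:ℝ) / n) ((2 * (k:ℝ) + 1) / n)
          else Set.Icc (0:ℝ) 1)
        = if j = 0 then ENNReal.ofReal (1 / n) else 1 := by
      intro j
      split
      · rw [Real.volume_Icc]
        congr 1
        field_simp
        ring
      · rw [Real.volume_Icc]
        norm_num
    simp_rw [hval]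
    simp [Finset.prod_ite_eq']
  -- plateau values of fstar
  have hplateau : ∀ x : Fin d → ℝ,
      x 0 ∈ Set.Icc (2 * (k:ℝ) / n) ((2 * (k:ℝ) + 1) / n) → ∀ i, fstar x i = v i := by
    intro x hx i
    have h1 : 2 * (k:ℝ) ≤ n * x 0 := by
      have := hx.1
      rw [div_le_iff₀ hn0] at this
      linarith
    have h2 : n * x 0 ≤ 2 * (k:ℝ) + 1 := by
      have := hx.2
      rw [le_div_iff₀ hn0] at this
      linarith
    simp only [hfstar, hv]
    by_cases hik : (i:ℕ) + 1 = k
    · have hkr : (k:ℝ) = ((i:ℕ):ℝ) + 1 := by exact_mod_cast hik.symm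
      rw [if_pos hik]
      have hA : (1:ℝ) ≤ n * x 0 - (2 * ((i:ℕ):ℝ) + 1) := by rw [hkr] at h1; linarith
      have hB : (1:ℝ) ≤ (2 * ((i:ℕ):ℝ) + 4) - n * x 0 := by rw [hkr] at h2; linarith
      rw [min_eq_left (le_min hA hB), max_eq_right zero_le_one]
    · rw [if_neg hik]
      have hcases : k ≤ (i:ℕ) ∨ (i:ℕ) + 2 ≤ k := by omega
      rcases hcases with hcase | hcase
      · have hkr : (k:ℝ) ≤ ((i:ℕ):ℝ) := by exact_mod_cast hcase
        have hA : n * x 0 - (2 * ((i:ℕ):ℝ) + 1) ≤ 0 := by linarith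
        refine max_eq_left (le_trans (le_trans (min_le_right _ _) (min_le_left _ _)) hA)
      · have hkr : ((i:ℕ):ℝ) + 2 ≤ (k:ℝ) := by exact_mod_cast hcase
        have hB : (2 * ((i:ℕ):ℝ) + 4) - n * x 0 ≤ 0 := by linarith
        refine max_eq_left (le_trans (le_trans (min_le_right _ _) (min_le_right _ _)) hB)
  -- pointwise lower bound on S
  have hpoint : ∀ x ∈ S,
      ENNReal.ofReal (δ ^ p) ≤ ENNReal.ofReal (∑ i, |fstar x i - t (g x) i| ^ p) := by
    intro x hxS
    apply ENNReal.ofReal_le_ofReal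
    have hx0 : x 0 ∈ Set.Icc (2 * (k:ℝ) / n) ((2 * (k:ℝ) + 1) / n) := by
      have := hxS 0 (Set.mem_univ 0)
      simpa using this
    set y : Fin m → ℝ := t (g x) with hy
    have hfv : ∀ i, fstar x i - y i = v i - y i := fun i => by
      rw [hplateau x hx0 i]
    obtain ⟨i₀, -, hmax⟩ := Finset.exists_max_image Finset.univ
      (fun i => |v i - y i|) Finset.univ_nonempty
    have h1 : |(∑ i, a i * v i) - c| ≤ |v i₀ - y i₀| := by
      have hcy : ∑ i, a i * y i = c := hplane (g x)
      have hrw : (∑ i, a i * v i) - c = ∑ i, a i * (v i - y i) := by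
        rw [← hcy, ← Finset.sum_sub_distrib]
        exact Finset.sum_congr rfl fun i _ => by ring
      rw [hrw]
      calc |∑ i, a i * (v i - y i)| ≤ ∑ i, |a i * (v i - y i)| :=
            Finset.abs_sum_le_sum_abs _ _
        _ ≤ ∑ i, |a i| * |v i₀ - y i₀| := by
            refine Finset.sum_le_sum fun i _ => ?_
            rw [abs_mul]
            exact mul_le_mul_of_nonneg_left (hmax i (Finset.mem_univ i)) (abs_nonneg _)
        _ = |v i₀ - y i₀| := by rw [← Finset.sum_mul, ha1, one_mul]
    have h2 : δ ≤ |v i₀ - y i₀| := le_trans hvlow h1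
    calc δ ^ p ≤ |v i₀ - y i₀| ^ p := Real.rpow_le_rpow hδ.le h2 (by linarith)
      _ ≤ ∑ i, |v i - y i| ^ p :=
          Finset.single_le_sum (f := fun i => |v i - y i| ^ p)
            (fun i _ => Real.rpow_nonneg (abs_nonneg _) p) (Finset.mem_univ i₀)
      _ = ∑ i, |fstar x i - y i| ^ p := by
          exact Finset.sum_congr rfl fun i _ => by rw [hfv i]
  -- lower bound on the integral
  have key : ENNReal.ofReal (δ ^ p * (1 / n)) ≤
      ∫⁻ x in Set.Icc (0 : Fin d → ℝ) 1,
        ENNReal.ofReal (∑ i, |fstar x i - t (g x) i| ^ p) := by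
    have hind : ∀ x, S.indicator (fun _ => ENNReal.ofReal (δ ^ p)) x ≤
        ENNReal.ofReal (∑ i, |fstar x i - t (g x) i| ^ p) := by
      intro x
      by_cases hx : x ∈ S
      · rw [Set.indicator_of_mem hx]
        exact hpoint x hx
      · rw [Set.indicator_of_notMem hx]
        exact zero_le
    calc ENNReal.ofReal (δ ^ p * (1 / n))
        = ENNReal.ofReal (δ ^ p) * volume S := by
          rw [hSvol, ENNReal.ofReal_mul hδp.le]
      _ = ∫⁻ x, S.indicator (fun _ => ENNReal.ofReal (δ ^ p)) x
            ∂(volume.restrict (Set.Icc (0 : Fin d → ℝ) 1)) := by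
          rw [lintegral_indicator hSmeas, setLIntegral_const,
            Measure.restrict_apply hSmeas, Set.inter_eq_left.mpr hSsub]
      _ ≤ _ := lintegral_mono hind
  have hfinal := ENNReal.rpow_le_rpow key (by positivity : (0:ℝ) ≤ 1 / p)
  rw [ENNReal.ofReal_rpow_of_pos (by positivity)] at hfinal
  calc ENNReal.ofReal (E / 2) < ENNReal.ofReal E := by
        rw [ENNReal.ofReal_lt_ofReal_iff hE0]
        linarith
    _ ≤ _ := by rw [hE]; exact hfinal
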